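/- Let γ := exp(2πi/3). For a 2×2 complex matrix M and a cube root of unity δ, define M_δ := [[M₁₁, δ·M₁₂], [δ²·M₂₁, M₂₂]]. Then there exist 2×2 complex matrices A, B, C of SU(1,1) form such that ∏_{δ : δ³ = 1} ‖A_{δ²}·B_δ·C‖ > ‖A‖³·‖B‖³·‖C‖³. Consequently, the function G ↦ log ‖G‖ does not satisfy the swapping inequality for d = 3. -/

import Mathlib

/-- A 2×2 complex matrix is of SU(1,1) form. -/
def SU11 (M : Matrix (Fin 2) (Fin 2) ℂ) : Prop :=
  ∃ a b : ℂ, M = !![a, b; (starRingEnd ℂ) b, (starRingEnd ℂ) a] ∧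
    ‖a‖ ^ 2 - ‖b‖ ^ 2 = 1

/-- The Hilbert–Schmidt size `sqrt(|M₁₁|² + |M₁₂|²)` of a matrix of SU(1,1) form. -/
noncomputable def hsNorm (M : Matrix (Fin 2) (Fin 2) ℂ) : ℝ :=
  Real.sqrt (‖M 0 0‖ ^ 2 + ‖M 0 1‖ ^ 2)

/-- The twisted matrix `M_δ = [[M₁₁, δ·M₁₂], [δ²·M₂₁, M₂₂]]`. -/
def twist (δ : ℂ) (M : Matrix (Fin 2) (Fin 2) ℂ) : Matrix (Fin 2) (Fin 2) ℂ :=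
  !![M 0 0, δ * M 0 1; δ ^ 2 * M 1 0, M 1 1]

noncomputable def ω : ℂ := ⟨-1/2, Real.sqrt 3 / 2⟩

lemma omega_eq : ω = -1/2 + (Real.sqrt 3 / 2 : ℝ) * Complex.I := by
  unfold ω
  rw [Complex.mk_eq_add_mul_I]
  push_cast
  ring

lemma sqrt3_sq : ((Real.sqrt 3 : ℝ) : ℂ) ^ 2 = 3 := by
  norm_cast
  rw [Real.sq_sqrt] <;> norm_num

lemma omega_cube : ω ^ 3 = 1 := by
  rw [omega_eq]
  set s : ℂ := ((Real.sqrt 3 : ℝ) : ℂ) with hs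
  have h1 : s ^ 2 = 3 := sqrt3_sq
  have h2 : Complex.I ^ 2 = -1 := Complex.I_sq
  push_cast
  linear_combination ((3 - s * Complex.I) / 8) * h1 +
    ((s ^ 3 * Complex.I - 3 * s ^ 2) / 8) * h2

lemma omega_ne_one : ω ≠ 1 := by
  intro h
  have him : ω.im = (1 : ℂ).im := by rw [h]
  simp only [Complex.one_im] at him
  have : Real.sqrt 3 / 2 = 0 := him
  have h3 : Real.sqrt 3 > 0 := Real.sqrt_pos.mpr (by norm_num)
  linarith

lemma omega_ne_zero : ω ≠ 0 := by
  intro h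
  have := omega_cube
  rw [h] at this
  simp at this

lemma omega_sq_ne_one : ω ^ 2 ≠ 1 := by
  intro h
  apply omega_ne_one
  calc ω = ω ^ 3 / ω ^ 2 := by field_simp [omega_ne_zero]
    _ = 1 := by rw [omega_cube, h]; norm_num

lemma omega_sq_ne_omega : ω ^ 2 ≠ ω := by
  intro h
  apply omega_ne_one
  have h2 : ω * ω = ω * 1 := by rw [mul_one]; rw [sq] at h; exact h
  exact mul_left_cancel₀ omega_ne_zero h2

lemma roots_finset_eq : Polynomial.nthRootsFinset 3 (1 : ℂ) = {1, ω, ω ^ 2} := by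
  symm
  apply Finset.eq_of_subset_of_card_le
  · intro x hx
    rw [Polynomial.mem_nthRootsFinset (by norm_num)]
    simp only [Finset.mem_insert, Finset.mem_singleton] at hx
    rcases hx with rfl | rfl | rfl
    · norm_num
    · exact omega_cube
    · rw [← pow_mul]
      calc ω ^ (2 * 3) = (ω ^ 3) ^ 2 := by ring
        _ = 1 := by rw [omega_cube]; norm_num
  · have h1 : (Polynomial.nthRootsFinset 3 (1 : ℂ)).card ≤ 3 := by
      classical
      rw [Polynomial.nthRootsFinset_def]
      exact le_trans (Multiset.toFinset_card_le _) (Polynomial.card_nthRoots 3 1)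
    have h2 : ({1, ω, ω ^ 2} : Finset ℂ).card = 3 := by
      rw [Finset.card_insert_of_notMem (by
        simp only [Finset.mem_insert, Finset.mem_singleton]
        push_neg
        exact ⟨Ne.symm omega_ne_one, Ne.symm omega_sq_ne_one⟩),
        Finset.card_insert_of_notMem (by
          simp only [Finset.mem_singleton]
          exact Ne.symm omega_sq_ne_omega),
        Finset.card_singleton]
    omega

lemma omega_re : ω.re = -1/2 := rfl
lemma omega_im : ω.im = Real.sqrt 3 / 2 := rfl

noncomputable def MA : Matrix (Fin 2) (Fin 2) ℂ :=
  !![((13/5 : ℝ) : ℂ), ((12/5 : ℝ) : ℂ); ((12/5 : ℝ) : ℂ), ((13/5 : ℝ) : ℂ)]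

noncomputable def MB : Matrix (Fin 2) (Fin 2) ℂ :=
  !![((13/12 : ℝ) : ℂ), ((-5/12 : ℝ) : ℂ); ((-5/12 : ℝ) : ℂ), ((13/12 : ℝ) : ℂ)]

lemma su11_MA : SU11 MA := by
  refine ⟨((13/5 : ℝ) : ℂ), ((12/5 : ℝ) : ℂ), ?_, ?_⟩
  · rw [MA, Complex.conj_ofReal, Complex.conj_ofReal]
  · rw [Complex.norm_real, Complex.norm_real]
    norm_num

lemma su11_MB : SU11 MB := by
  refine ⟨((13/12 : ℝ) : ℂ), ((-5/12 : ℝ) : ℂ), ?_, ?_⟩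
  · rw [MB, Complex.conj_ofReal, Complex.conj_ofReal]
  · rw [Complex.norm_real, Complex.norm_real]
    norm_num

lemma sqrt_pow3 (x : ℝ) (hx : 0 ≤ x) : Real.sqrt x ^ 3 = Real.sqrt (x ^ 3) := by
  have h1 : (x : ℝ) ^ 3 = x ^ 2 * x := by ring
  rw [h1, Real.sqrt_mul (sq_nonneg x), Real.sqrt_sq hx]
  rw [pow_succ, Real.sq_sqrt hx]

lemma hs_MA : hsNorm MA = Real.sqrt (313/25) := by
  rw [hsNorm]
  congr 1
  simp only [MA, Matrix.cons_val', Matrix.cons_val_zero, Matrix.cons_val_one,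
    Matrix.head_cons, Matrix.head_fin_const, Matrix.of_apply, Matrix.empty_val', Matrix.cons_val_fin_one, Complex.norm_real, Real.norm_eq_abs]
  rw [sq_abs, sq_abs]
  norm_num

lemma hs_MB : hsNorm MB = Real.sqrt (97/72) := by
  rw [hsNorm]
  congr 1
  simp only [MB, Matrix.cons_val', Matrix.cons_val_zero, Matrix.cons_val_one,
    Matrix.head_cons, Matrix.head_fin_const, Matrix.of_apply, Matrix.empty_val', Matrix.cons_val_fin_one, Complex.norm_real, Real.norm_eq_abs]
  rw [sq_abs, sq_abs]
  norm_num

lemma key_one : hsNorm (twist ((1:ℂ) ^ 2) MA * twist 1 MB * MA)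
    = Real.sqrt (6250081/45000) := by
  rw [hsNorm]
  congr 1
  simp only [twist, MA, MB, Matrix.mul_apply, Fin.sum_univ_two, Matrix.cons_val',
    Matrix.cons_val_zero, Matrix.cons_val_one, Matrix.head_cons, Matrix.head_fin_const, Matrix.of_apply, Matrix.empty_val',
    Matrix.cons_val_fin_one, Complex.sq_norm, Complex.normSq_apply, one_pow, one_mul,
    Complex.add_re, Complex.add_im, Complex.mul_re, Complex.mul_im,
    Complex.ofReal_re, Complex.ofReal_im]
  norm_num

lemma key_omega : hsNorm (twist (ω ^ 2) MA * twist ω MB * MA)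
    = Real.sqrt (12954649/45000) := by
  have h3 : Real.sqrt 3 ^ 2 = 3 := Real.sq_sqrt (by norm_num)
  rw [hsNorm]
  congr 1
  simp only [twist, MA, MB, Matrix.mul_apply, Fin.sum_univ_two, Matrix.cons_val',
    Matrix.cons_val_zero, Matrix.cons_val_one, Matrix.head_cons, Matrix.head_fin_const, Matrix.of_apply, Matrix.empty_val',
    Matrix.cons_val_fin_one, Complex.sq_norm, Complex.normSq_apply]
  simp only [pow_two, Complex.add_re, Complex.add_im, Complex.mul_re, Complex.mul_im,
    Complex.ofReal_re, Complex.ofReal_im, omega_re, omega_im]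
  linear_combination ((313:ℝ)/6400 * Real.sqrt 3 ^ 6 + 43403/32000 * Real.sqrt 3 ^ 4
    + 4220681/480000 * Real.sqrt 3 ^ 2 + 44741881/1440000) * h3

lemma key_omega_sq : hsNorm (twist ((ω ^ 2) ^ 2) MA * twist (ω ^ 2) MB * MA)
    = Real.sqrt (12954649/45000) := by
  have h3 : Real.sqrt 3 ^ 2 = 3 := Real.sq_sqrt (by norm_num)
  rw [hsNorm]
  congr 1
  simp only [twist, MA, MB, Matrix.mul_apply, Fin.sum_univ_two, Matrix.cons_val',
    Matrix.cons_val_zero, Matrix.cons_val_one, Matrix.head_cons, Matrix.head_fin_const, Matrix.of_apply, Matrix.empty_val',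
    Matrix.cons_val_fin_one, Complex.sq_norm, Complex.normSq_apply]
  simp only [pow_two, Complex.add_re, Complex.add_im, Complex.mul_re, Complex.mul_im,
    Complex.ofReal_re, Complex.ofReal_im, omega_re, omega_im]
  linear_combination ((313:ℝ)/1638400 * Real.sqrt 3 ^ 14 + 3443/1638400 * Real.sqrt 3 ^ 12
    - 34327/8192000 * Real.sqrt 3 ^ 10 + 27923/8192000 * Real.sqrt 3 ^ 8
    + 84949961/122880000 * Real.sqrt 3 ^ 6 + 1601934467/122880000 * Real.sqrt 3 ^ 4
    + 12960563287/368640000 * Real.sqrt 3 ^ 2 + 24119667917/368640000) * h3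

theorem hs_log_fails_swapping :
    ∃ A B C : Matrix (Fin 2) (Fin 2) ℂ, SU11 A ∧ SU11 B ∧ SU11 C ∧
      hsNorm A ^ 3 * hsNorm B ^ 3 * hsNorm C ^ 3 <
        ∏ δ ∈ Polynomial.nthRootsFinset 3 (1 : ℂ),
          hsNorm (twist (δ ^ 2) A * twist δ B * C) := by
  refine ⟨MA, MB, MA, su11_MA, su11_MB, su11_MA, ?_⟩
  rw [roots_finset_eq]
  rw [Finset.prod_insert (by
      simp only [Finset.mem_insert, Finset.mem_singleton]
      push_neg
      exact ⟨Ne.symm omega_ne_one, Ne.symm omega_sq_ne_one⟩),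
    Finset.prod_insert (by
      simp only [Finset.mem_singleton]
      exact Ne.symm omega_sq_ne_omega),
    Finset.prod_singleton]
  rw [key_one, key_omega, key_omega_sq, hs_MA, hs_MB]
  rw [sqrt_pow3 _ (by norm_num), sqrt_pow3 _ (by norm_num),
    ← Real.sqrt_mul (by positivity), ← Real.sqrt_mul (by positivity),
    ← Real.sqrt_mul (by norm_num), ← Real.sqrt_mul (by norm_num)]
  apply Real.sqrt_lt_sqrt (by positivity)
  norm_num
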